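/- arXiv:1308.4614 — 4 statements merged into one kernel-verified Lean document; each statement's English description precedes it below -/
import Mathlib

section
/- Let 𝔞 be a nonnegative bounded measurable function on ℝ^d with first-order weak derivatives bounded by a constant K. Then for every u ∈ L_p(ℝ^d) with p ∈ [2,∞), λ ∈ ℝ^d and h ≠ 0, ∫_{ℝ^d} |u|^{p−2} u · δ_{−h,λ}(𝔞 δ_{h,λ}u) dx ≤ 0. -/
open MeasureTheory
open scoped ENNReal

/-- Finite difference operator `δ_{h,λ}φ(x) = (1/h)(φ(x+hλ) - φ(x))`. -/
noncomputable def finiteDiff {d : ℕ} (h : ℝ) (lam : EuclideanSpace ℝ (Fin d))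
    (φ : EuclideanSpace ℝ (Fin d) → ℝ) (x : EuclideanSpace ℝ (Fin d)) : ℝ :=
  (φ (x + h • lam) - φ x) / h

private lemma rpow_mul_self_eq {p t : ℝ} (hp : 2 ≤ p) (ht : 0 ≤ t) :
    |t| ^ (p - 2) * t = t ^ (p - 1) := by
  rcases eq_or_lt_of_le ht with h0 | h0
  · rw [← h0]
    simp [Real.zero_rpow (by linarith : p - 1 ≠ 0)]
  · rw [abs_of_pos h0, ← Real.rpow_add_one h0.ne' (p - 2)]
    congr 1
    ring

private lemma rpow_mul_self_neg_eq {p a : ℝ} (hp : 2 ≤ p) (ha : a < 0) :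
    |a| ^ (p - 2) * a = -((-a) ^ (p - 1)) := by
  have h := rpow_mul_self_eq (t := -a) hp (by linarith)
  rw [abs_of_pos (by linarith : (0:ℝ) < -a)] at h
  rw [abs_of_neg ha, show ((-a):ℝ) ^ (p - 2) * a = -((-a) ^ (p - 2) * (-a)) by ring, h]

private lemma monotone_absPow {p : ℝ} (hp : 2 ≤ p) :
    Monotone (fun t : ℝ => |t| ^ (p - 2) * t) := by
  have hp1 : (0:ℝ) ≤ p - 1 := by linarith
  intro a b hab
  simp only
  rcases le_or_gt 0 a with ha | ha
  · rw [rpow_mul_self_eq hp ha, rpow_mul_self_eq hp (ha.trans hab)]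
    exact Real.rpow_le_rpow ha hab hp1
  · rcases le_or_gt 0 b with hb | hb
    · have h1 : |a| ^ (p - 2) * a ≤ 0 :=
        mul_nonpos_of_nonneg_of_nonpos (Real.rpow_nonneg (abs_nonneg a) _) ha.le
      have h2 : 0 ≤ |b| ^ (p - 2) * b :=
        mul_nonneg (Real.rpow_nonneg (abs_nonneg b) _) hb
      linarith
    · rw [rpow_mul_self_neg_eq hp ha, rpow_mul_self_neg_eq hp hb]
      have : (-b) ^ (p - 1) ≤ (-a) ^ (p - 1) :=
        Real.rpow_le_rpow (by linarith) (by linarith) hp1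
      linarith

/-- If `𝔞 ≥ 0` is bounded measurable with first-order (weak) derivatives bounded by `K`
(encoded as `𝔞` being `K`-Lipschitz), then for `u ∈ L_p`, `p ∈ [2,∞)`, `λ ∈ ℝ^d`, `h ≠ 0`:
`∫ |u|^{p−2} u · δ_{−h,λ}(𝔞 δ_{h,λ}u) dx ≤ 0`. -/
theorem integral_diffusion_nonpos {d : ℕ} (p : ℝ) (hp : 2 ≤ p) (K : ℝ) (hK : 0 ≤ K)
    (𝔞 : EuclideanSpace ℝ (Fin d) → ℝ) (ha_nonneg : ∀ x, 0 ≤ 𝔞 x)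
    (ha_bdd : ∀ x, 𝔞 x ≤ K) (ha_meas : Measurable 𝔞)
    (ha_lip : LipschitzWith (Real.toNNReal K) 𝔞)
    (u : EuclideanSpace ℝ (Fin d) → ℝ) (hu_meas : Measurable u)
    (hu : MemLp u (ENNReal.ofReal p) (volume : Measure (EuclideanSpace ℝ (Fin d))))
    (h : ℝ) (hh : h ≠ 0) (lam : EuclideanSpace ℝ (Fin d)) :
    (∫ x, |u x| ^ (p - 2) * u x
        * finiteDiff (-h) lam (fun y => 𝔞 y * finiteDiff h lam u y) x) ≤ 0 := by
  classical
  have hp1 : (0:ℝ) < p - 1 := by linarith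
  have hp0 : (0:ℝ) < p := by linarith
  set μ : Measure (EuclideanSpace ℝ (Fin d)) := volume with hμ
  set c : EuclideanSpace ℝ (Fin d) := h • lam with hc
  set P : ℝ≥0∞ := ENNReal.ofReal p with hP
  set Q : ℝ≥0∞ := ENNReal.ofReal (p / (p - 1)) with hQ
  set g : EuclideanSpace ℝ (Fin d) → ℝ := fun x => |u x| ^ (p - 2) * u x with hgdef
  set v : EuclideanSpace ℝ (Fin d) → ℝ := fun y => 𝔞 y * finiteDiff h lam u y with hvdef
  have hg_meas : Measurable g := by
    have hcont : Continuous fun t : ℝ => t ^ (p - 2) :=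
      Real.continuous_rpow_const (by linarith)
    exact (hcont.measurable.comp hu_meas.abs).mul hu_meas
  -- g ∈ L_Q
  have hg_mem : MemLp g Q μ := by
    have h1 := hu.norm_rpow_div (ENNReal.ofReal (p - 1))
    rw [ENNReal.toReal_ofReal hp1.le] at h1
    have hPQ : P / ENNReal.ofReal (p - 1) = Q := by
      rw [hQ, ENNReal.ofReal_div_of_pos hp1]
    rw [hPQ] at h1
    refine h1.of_le hg_meas.aestronglyMeasurable (Filter.Eventually.of_forall fun x => ?_)
    have e1 : ‖g x‖ = |u x| ^ (p - 1) := by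
      rw [hgdef]
      simp only [Real.norm_eq_abs, abs_mul,
        abs_of_nonneg (Real.rpow_nonneg (abs_nonneg (u x)) (p - 2))]
      simpa [abs_abs] using rpow_mul_self_eq hp (abs_nonneg (u x))
    rw [e1, Real.norm_eq_abs,
      abs_of_nonneg (Real.rpow_nonneg (norm_nonneg (u x)) (p - 1)), Real.norm_eq_abs]
  -- conjugate exponents
  have hconj : (1:ℝ≥0∞) / 1 = 1 / Q + 1 / P := by
    rw [hP, hQ, one_div, one_div, one_div,
      ← ENNReal.ofReal_inv_of_pos (by positivity : (0:ℝ) < p / (p - 1)),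
      ← ENNReal.ofReal_inv_of_pos hp0,
      ← ENNReal.ofReal_add (by positivity) (by positivity)]
    have : (p / (p - 1))⁻¹ + p⁻¹ = 1 := by
      field_simp
      ring
    rw [this]
    simp
  -- products of L_Q and L_P are integrable
  have hprod : ∀ (φ w : EuclideanSpace ℝ (Fin d) → ℝ), MemLp φ Q μ → MemLp w P μ →
      Integrable (fun x => φ x * w x) μ := by
    intro φ w hφ hw
    haveI : ENNReal.HolderTriple Q P 1 := ⟨by simpa [one_div] using hconj.symm⟩
    have := hw.smul (r := 1) hφ
    rw [memLp_one_iff_integrable] at this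
    exact this
  have hmp : MeasurePreserving (fun x => x + c) μ μ := measurePreserving_add_right μ c
  have hmp' : MeasurePreserving (fun x => x + -c) μ μ := measurePreserving_add_right μ (-c)
  have huc : MemLp (fun x => u (x + c)) P μ := hu.comp_measurePreserving hmp
  -- v ∈ L_P
  have hv_mem : MemLp v P μ := by
    have hw : MemLp (fun x => (u (x + c) - u x) * h⁻¹) P μ := by
      have := (huc.sub hu).const_mul h⁻¹
      simpa [Pi.sub_apply, mul_comm] using this
    have ha_top : MemLp 𝔞 ⊤ μ :=
      memLp_top_of_bound ha_meas.aestronglyMeasurable K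
        (Filter.Eventually.of_forall fun x => by
          rw [Real.norm_eq_abs, abs_of_nonneg (ha_nonneg x)]; exact ha_bdd x)
    have := hw.smul (r := P) ha_top
    have e : (𝔞 • fun x => (u (x + c) - u x) * h⁻¹) = v := by
      funext x
      simp [hvdef, finiteDiff, hc, Pi.smul_apply, smul_eq_mul, div_eq_mul_inv]
    rwa [e] at this
  have hgc_mem : MemLp (fun x => g (x + c)) Q μ := hg_mem.comp_measurePreserving hmp
  have I1 : Integrable (fun x => g x * v x) μ := hprod g v hg_mem hv_mem
  have I2 : Integrable (fun x => g (x + c) * v x) μ := hprod _ v hgc_mem hv_mem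
  have I3 : Integrable (fun x => g x * v (x + -c)) μ := by
    have := (hmp'.integrable_comp I2.aestronglyMeasurable).mpr I2
    have e : ((fun x => g (x + c) * v x) ∘ fun x => x + -c)
        = fun x => g x * v (x + -c) := by
      funext x
      simp [Function.comp, neg_add_cancel_right]
    rwa [e] at this
  -- rewrite the integrand
  have goal_eq : (∫ x, |u x| ^ (p - 2) * u x
      * finiteDiff (-h) lam (fun y => 𝔞 y * finiteDiff h lam u y) x ∂μ)
      = ∫ x, (g x * v x * h⁻¹ - g x * v (x + -c) * h⁻¹) ∂μ := by
    congr 1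
    funext x
    have e2 : finiteDiff (-h) lam v x = (v (x + -c) - v x) / (-h) := by
      rw [finiteDiff, hc, neg_smul]
    show g x * finiteDiff (-h) lam v x = _
    rw [e2, div_eq_mul_inv, inv_neg]
    ring
  rw [hμ] at goal_eq ⊢
  rw [goal_eq, integral_sub (I1.mul_const _) (I3.mul_const _)]
  have subst : (∫ x, g x * v (x + -c) * h⁻¹ ∂μ) = ∫ x, g (x + c) * v x * h⁻¹ ∂μ := by
    rw [← integral_add_right_eq_self (μ := μ) (fun x => g (x + c) * v x * h⁻¹) (-c)]
    congr 1
    funext x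
    rw [neg_add_cancel_right]
  rw [subst, ← integral_sub (I1.mul_const _) (I2.mul_const _)]
  apply integral_nonpos
  intro x
  simp only [Pi.zero_apply]
  have hmono : 0 ≤ (g (x + c) - g x) * (u (x + c) - u x) := by
    rcases le_total (u x) (u (x + c)) with hle | hle
    · exact mul_nonneg (sub_nonneg.2 (monotone_absPow hp hle)) (sub_nonneg.2 hle)
    · have h1 : g (x + c) - g x ≤ 0 := sub_nonpos.2 (monotone_absPow hp hle)
      have h2 : u (x + c) - u x ≤ 0 := sub_nonpos.2 hle
      nlinarith
  have e : g x * v x * h⁻¹ - g (x + c) * v x * h⁻¹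
      = -(((g (x + c) - g x) * (u (x + c) - u x)) * (𝔞 x * (h⁻¹ * h⁻¹))) := by
    simp only [hvdef, finiteDiff, hc, div_eq_mul_inv]
    ring
  rw [e]
  have hnn : 0 ≤ ((g (x + c) - g x) * (u (x + c) - u x)) * (𝔞 x * (h⁻¹ * h⁻¹)) :=
    mul_nonneg hmono (mul_nonneg (ha_nonneg x) (mul_self_nonneg _))
  linarith
end

section
/- Let p = 2^k (k ≥ 1 integer), and let 𝔭 be a nonnegative measurable function on ℝ^d with weak first derivatives bounded by K. Then for every u ∈ L_p(ℝ^d), λ ∈ ℝ^d and h > 0, ∫_{ℝ^d} u^{p−1} 𝔭 δ_{h,λ}u dx ≤ (K|λ|/p) |u|_{L_p}^p. -/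
open MeasureTheory
open scoped ENNReal

/-- Tangent-line inequality for `x ^ 2^k`. -/
lemma tangent_pow (k : ℕ) (hk : 1 ≤ k) (a b : ℝ) :
    ((2 ^ k : ℕ) : ℝ) * a ^ (2 ^ k - 1) * (b - a) ≤ b ^ (2 ^ k) - a ^ (2 ^ k) := by
  induction k with
  | zero => omega
  | succ n ih =>
    rcases Nat.eq_or_lt_of_le hk with h1 | h1
    · -- n + 1 = 1
      have hn : n = 0 := by omega
      subst hn
      norm_num
      nlinarith [sq_nonneg (b - a)]
    · have hn : 1 ≤ n := by omega
      have ih' := ih hn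
      have hpe : Even (2 ^ n) := (Nat.even_pow).mpr ⟨even_two, by omega⟩
      have ha : (0:ℝ) ≤ a ^ (2 ^ n) := hpe.pow_nonneg a
      have h2 : 2 ^ (n + 1) = 2 ^ n + 2 ^ n := by rw [pow_succ]; omega
      have h3 : 2 ^ (n + 1) - 1 = 2 ^ n + (2 ^ n - 1) := by
        have : 1 ≤ 2 ^ n := Nat.one_le_two_pow
        omega
      rw [h3, h2, pow_add b, pow_add a, pow_add a]
      have hcast : ((2 ^ n + 2 ^ n : ℕ) : ℝ) = 2 * ((2 ^ n : ℕ) : ℝ) := by push_cast; ring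
      rw [hcast]
      nlinarith [mul_le_mul_of_nonneg_left ih' (mul_nonneg (by norm_num : (0:ℝ) ≤ 2) ha),
        sq_nonneg (b ^ (2 ^ n) - a ^ (2 ^ n))]

lemma bounded_step {d : ℕ} (p : ℕ) (hppos : (0:ℝ) < (p:ℝ)) (hpe : Even p)
    (htangent : ∀ a b : ℝ, (p:ℝ) * a ^ (p - 1) * (b - a) ≤ b ^ p - a ^ p)
    (K : ℝ) (hK : 0 ≤ K)
    (𝔮 : EuclideanSpace ℝ (Fin d) → ℝ) (h𝔮 : ∀ x, 0 ≤ 𝔮 x) (h𝔮m : Measurable 𝔮)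
    (h𝔮lip : LipschitzWith (Real.toNNReal K) 𝔮) (M : ℝ) (h𝔮b : ∀ x, 𝔮 x ≤ M)
    (u : EuclideanSpace ℝ (Fin d) → ℝ) (hum : Measurable u)
    (hup : Integrable (fun x => |u x| ^ p))
    (h : ℝ) (hh : 0 < h) (lam : EuclideanSpace ℝ (Fin d))
    (hfi : Integrable (fun x => u x ^ (p - 1) * 𝔮 x * finiteDiff h lam u x)) :
    (∫ x, u x ^ (p - 1) * 𝔮 x * finiteDiff h lam u x)
      ≤ (K * ‖lam‖ / p) * ∫ x, |u x| ^ p := by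
  have hph : (0:ℝ) < (p:ℝ) * h := mul_pos hppos hh
  have hp0 : (p:ℝ) ≠ 0 := hppos.ne'
  have hh0 : h ≠ 0 := hh.ne'
  have hu2 : Measurable fun x : EuclideanSpace ℝ (Fin d) => |u x| ^ p :=
    hum.abs.pow_const p
  have hutr : Integrable (fun x => |u (x + h • lam)| ^ p) := by
    have := ((measurePreserving_add_right (volume : Measure (EuclideanSpace ℝ (Fin d)))
      (h • lam)).integrable_comp hu2.aestronglyMeasurable).mpr hup
    exact this
  -- the coefficient function is bounded
  have hcoefm : Measurable fun x : EuclideanSpace ℝ (Fin d) => 𝔮 x / ((p:ℝ) * h) :=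
    h𝔮m.div_const _
  have hcoefb : ∃ C, ∀ x : EuclideanSpace ℝ (Fin d), ‖𝔮 x / ((p:ℝ) * h)‖ ≤ C := by
    refine ⟨M / ((p:ℝ) * h), fun x => ?_⟩
    rw [Real.norm_eq_abs, abs_of_nonneg (div_nonneg (h𝔮 x) hph.le)]
    exact (div_le_div_iff_of_pos_right hph).mpr (h𝔮b x)
  have hA : Integrable (fun x => 𝔮 x / ((p:ℝ) * h) * |u (x + h • lam)| ^ p) :=
    hutr.bdd_mul hcoefm.aestronglyMeasurable (Filter.Eventually.of_forall hcoefb.choose_spec)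
  have hB : Integrable (fun x => 𝔮 x / ((p:ℝ) * h) * |u x| ^ p) :=
    hup.bdd_mul hcoefm.aestronglyMeasurable (Filter.Eventually.of_forall hcoefb.choose_spec)
  -- pointwise tangent bound
  have hpt : ∀ x, u x ^ (p - 1) * 𝔮 x * finiteDiff h lam u x ≤
      𝔮 x / ((p:ℝ) * h) * |u (x + h • lam)| ^ p - 𝔮 x / ((p:ℝ) * h) * |u x| ^ p := by
    intro x
    rw [Even.pow_abs hpe, Even.pow_abs hpe]
    simp only [finiteDiff]
    have key := htangent (u x) (u (x + h • lam))
    have h2 := mul_le_mul_of_nonneg_left key (div_nonneg (h𝔮 x) hph.le)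
    calc u x ^ (p - 1) * 𝔮 x * ((u (x + h • lam) - u x) / h)
        = 𝔮 x / ((p:ℝ) * h) * ((p:ℝ) * u x ^ (p - 1) * (u (x + h • lam) - u x)) := by
          field_simp
      _ ≤ 𝔮 x / ((p:ℝ) * h) * (u (x + h • lam) ^ p - u x ^ p) := h2
      _ = 𝔮 x / ((p:ℝ) * h) * u (x + h • lam) ^ p - 𝔮 x / ((p:ℝ) * h) * u x ^ p := by ring
  -- translated coefficient function
  have hFm : Measurable fun x : EuclideanSpace ℝ (Fin d) => 𝔮 (x - h • lam) / ((p:ℝ) * h) :=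
    (h𝔮m.comp (measurable_sub_const _)).div_const _
  have hFb : ∃ C, ∀ x : EuclideanSpace ℝ (Fin d), ‖𝔮 (x - h • lam) / ((p:ℝ) * h)‖ ≤ C := by
    refine ⟨M / ((p:ℝ) * h), fun x => ?_⟩
    rw [Real.norm_eq_abs, abs_of_nonneg (div_nonneg (h𝔮 _) hph.le)]
    exact (div_le_div_iff_of_pos_right hph).mpr (h𝔮b _)
  have hF : Integrable (fun x => 𝔮 (x - h • lam) / ((p:ℝ) * h) * |u x| ^ p) :=
    hup.bdd_mul hFm.aestronglyMeasurable (Filter.Eventually.of_forall hFb.choose_spec)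
  have hFA : (∫ x, 𝔮 x / ((p:ℝ) * h) * |u (x + h • lam)| ^ p)
      = ∫ x, 𝔮 (x - h • lam) / ((p:ℝ) * h) * |u x| ^ p := by
    rw [← integral_add_right_eq_self
      (fun x => 𝔮 (x - h • lam) / ((p:ℝ) * h) * |u x| ^ p) (h • lam)]
    simp only [add_sub_cancel_right]
  -- Lipschitz bound on the translated difference
  have hlipb : ∀ x : EuclideanSpace ℝ (Fin d),
      |𝔮 (x - h • lam) - 𝔮 x| ≤ K * (h * ‖lam‖) := by
    intro x
    have hd := h𝔮lip.dist_le_mul (x - h • lam) x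
    rw [Real.dist_eq] at hd
    have : dist (x - h • lam) x = h * ‖lam‖ := by
      rw [dist_eq_norm]
      simp [norm_smul, abs_of_pos hh]
    rw [this, Real.coe_toNNReal K hK] at hd
    exact hd
  -- the difference integrand
  have hGm : Measurable fun x : EuclideanSpace ℝ (Fin d) =>
      (𝔮 (x - h • lam) - 𝔮 x) / ((p:ℝ) * h) :=
    ((h𝔮m.comp (measurable_sub_const _)).sub h𝔮m).div_const _
  have hGb : ∃ C, ∀ x : EuclideanSpace ℝ (Fin d),
      ‖(𝔮 (x - h • lam) - 𝔮 x) / ((p:ℝ) * h)‖ ≤ C := by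
    refine ⟨K * (h * ‖lam‖) / ((p:ℝ) * h), fun x => ?_⟩
    rw [Real.norm_eq_abs, abs_div, abs_of_pos hph]
    exact (div_le_div_iff_of_pos_right hph).mpr (hlipb x)
  have hG : Integrable (fun x => (𝔮 (x - h • lam) - 𝔮 x) / ((p:ℝ) * h) * |u x| ^ p) :=
    hup.bdd_mul hGm.aestronglyMeasurable (Filter.Eventually.of_forall hGb.choose_spec)
  have hGpt : ∀ x, (𝔮 (x - h • lam) - 𝔮 x) / ((p:ℝ) * h) * |u x| ^ p
      ≤ (K * ‖lam‖ / p) * |u x| ^ p := by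
    intro x
    apply mul_le_mul_of_nonneg_right _ (by positivity)
    have h1 : (𝔮 (x - h • lam) - 𝔮 x) / ((p:ℝ) * h) ≤ K * (h * ‖lam‖) / ((p:ℝ) * h) :=
      (div_le_div_iff_of_pos_right hph).mpr ((le_abs_self _).trans (hlipb x))
    have h2 : K * (h * ‖lam‖) / ((p:ℝ) * h) = K * ‖lam‖ / p := by
      field_simp
    rw [h2] at h1; exact h1
  calc (∫ x, u x ^ (p - 1) * 𝔮 x * finiteDiff h lam u x)
      ≤ ∫ x, (𝔮 x / ((p:ℝ) * h) * |u (x + h • lam)| ^ p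
          - 𝔮 x / ((p:ℝ) * h) * |u x| ^ p) := integral_mono hfi (hA.sub hB) hpt
    _ = (∫ x, 𝔮 x / ((p:ℝ) * h) * |u (x + h • lam)| ^ p)
          - ∫ x, 𝔮 x / ((p:ℝ) * h) * |u x| ^ p := integral_sub hA hB
    _ = (∫ x, 𝔮 (x - h • lam) / ((p:ℝ) * h) * |u x| ^ p)
          - ∫ x, 𝔮 x / ((p:ℝ) * h) * |u x| ^ p := by rw [hFA]
    _ = ∫ x, (𝔮 (x - h • lam) - 𝔮 x) / ((p:ℝ) * h) * |u x| ^ p := by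
          rw [← integral_sub hF hB]
          congr 1; funext x; ring
    _ ≤ ∫ x, (K * ‖lam‖ / p) * |u x| ^ p := integral_mono hG (hup.const_mul _) hGpt
    _ = (K * ‖lam‖ / p) * ∫ x, |u x| ^ p := integral_const_mul _ _

/-- For `p = 2^k` (`k ≥ 1`), `𝔭 ≥ 0` measurable with (weak) first derivatives bounded by
`K` (encoded as `K`-Lipschitz), `u ∈ L_p`, `λ ∈ ℝ^d` and `h > 0`:
`∫ u^{p−1} 𝔭 δ_{h,λ}u dx ≤ (K|λ|/p) |u|_{L_p}^p`. -/
theorem integral_convection_bound {d : ℕ} (k : ℕ) (hk : 1 ≤ k) (p : ℕ) (hp : p = 2 ^ k)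
    (K : ℝ) (hK : 0 ≤ K)
    (𝔭 : EuclideanSpace ℝ (Fin d) → ℝ) (h𝔭 : ∀ x, 0 ≤ 𝔭 x) (h𝔭m : Measurable 𝔭)
    (h𝔭lip : LipschitzWith (Real.toNNReal K) 𝔭)
    (u : EuclideanSpace ℝ (Fin d) → ℝ) (hum : Measurable u)
    (hu : MemLp u (p : ℝ≥0∞) (volume : Measure (EuclideanSpace ℝ (Fin d))))
    (h : ℝ) (hh : 0 < h) (lam : EuclideanSpace ℝ (Fin d)) :
    (∫ x, u x ^ (p - 1) * 𝔭 x * finiteDiff h lam u x)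
      ≤ (K * ‖lam‖ / p) * ∫ x, |u x| ^ p := by
  have hppos : (0:ℝ) < (p:ℝ) := by
    subst hp; positivity
  have hpe : Even p := by
    subst hp; exact (Nat.even_pow).mpr ⟨even_two, by omega⟩
  have htangent : ∀ a b : ℝ, (p:ℝ) * a ^ (p - 1) * (b - a) ≤ b ^ p - a ^ p := by
    subst hp; exact tangent_pow k hk
  -- |u|^p is integrable
  have hup : Integrable (fun x => |u x| ^ p) := by
    have h1 := hu.integrable_norm_rpow (by exact_mod_cast hppos.ne' : (p:ℝ≥0∞) ≠ 0)
      (by simp : (p : ℝ≥0∞) ≠ ⊤)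
    refine h1.congr (Filter.Eventually.of_forall fun x => ?_)
    simp [Real.rpow_natCast]
  by_cases hfi : Integrable (fun x => u x ^ (p - 1) * 𝔭 x * finiteDiff h lam u x)
  · -- truncation
    set F : ℕ → EuclideanSpace ℝ (Fin d) → ℝ :=
      fun n x => u x ^ (p - 1) * min (𝔭 x) n * finiteDiff h lam u x with hF
    have hδm : Measurable (finiteDiff h lam u) := by
      unfold finiteDiff
      exact ((hum.comp (measurable_add_const (h • lam))).sub hum).div_const h
    have habs : ∀ (n : ℕ) x, |F n x| ≤ |u x ^ (p - 1) * 𝔭 x * finiteDiff h lam u x| := by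
      intro n x
      have h1 : |min (𝔭 x) (n:ℝ)| ≤ |𝔭 x| := by
        rw [abs_of_nonneg (le_min (h𝔭 x) (Nat.cast_nonneg n)), abs_of_nonneg (h𝔭 x)]
        exact min_le_left _ _
      rw [hF]
      simp only [abs_mul]
      gcongr
    have hFm : ∀ n, Measurable (F n) := fun n =>
      ((hum.pow_const _).mul (h𝔭m.min measurable_const)).mul hδm
    have hFi : ∀ n, Integrable (F n) := fun n =>
      hfi.mono (hFm n).aestronglyMeasurable
        (Filter.Eventually.of_forall fun x => by
          rw [Real.norm_eq_abs]; exact habs n x)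
    have hstep : ∀ n : ℕ, (∫ x, F n x) ≤ (K * ‖lam‖ / p) * ∫ x, |u x| ^ p := by
      intro n
      exact bounded_step p hppos hpe htangent K hK
        (fun x => min (𝔭 x) n) (fun x => le_min (h𝔭 x) (Nat.cast_nonneg n))
        (h𝔭m.min measurable_const)
        ((h𝔭lip.min (LipschitzWith.const _)).weaken (by simp))
        n (fun x => min_le_right _ _) u hum hup h hh lam (hFi n)
    have hlim : Filter.Tendsto (fun n => ∫ x, F n x) Filter.atTop
        (nhds (∫ x, u x ^ (p - 1) * 𝔭 x * finiteDiff h lam u x)) := by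
      refine tendsto_integral_of_dominated_convergence
        (fun x => |u x ^ (p - 1) * 𝔭 x * finiteDiff h lam u x|)
        (fun n => (hFm n).aestronglyMeasurable) hfi.abs
        (fun n => Filter.Eventually.of_forall fun x => by
          simpa [Real.norm_eq_abs] using habs n x)
        (Filter.Eventually.of_forall fun x => ?_)
      refine tendsto_atTop_of_eventually_const (i₀ := ⌈𝔭 x⌉₊) fun i hi => ?_
      rw [hF]
      simp only
      rw [min_eq_left ((Nat.le_ceil _).trans (Nat.cast_le.mpr hi))]
    exact le_of_tendsto hlim (Filter.Eventually.of_forall hstep)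
  · rw [integral_undef hfi]
    exact mul_nonneg (div_nonneg (mul_nonneg hK (norm_nonneg _)) (Nat.cast_nonneg _))
      (integral_nonneg fun x => by positivity)
end

section
/- Let Λ ⊂ ℝ^d be a finite set such that every linearly dependent subset of Λ is linearly dependent over the rationals, and let 𝔾_h = {h(λ₁+⋯+λ_n) : λᵢ ∈ Λ, n ≥ 1} for h > 0. Then 𝔾_h ∩ B is a finite set for every bounded set B ⊂ ℝ^d. -/
open Submodule Set Bornology Pointwise

/-- Common denominator lemma: an element of the `ℚ`-span of `s` has a positive integer
multiple in the `ℤ`-span of `s`. -/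
lemma aux_denom {E : Type*} [AddCommGroup E] [Module ℚ E] (s : Set E) {x : E}
    (hx : x ∈ span ℚ s) : ∃ n : ℕ, 0 < n ∧ (n : ℤ) • x ∈ span ℤ s := by
  induction hx using span_induction with
  | mem x h => exact ⟨1, one_pos, by simpa using subset_span h⟩
  | zero => exact ⟨1, one_pos, by simp⟩
  | add x y hx hy ihx ihy =>
      obtain ⟨m, hm, hmx⟩ := ihx
      obtain ⟨n, hn, hny⟩ := ihy
      refine ⟨m * n, Nat.mul_pos hm hn, ?_⟩
      have h1 : ((m * n : ℕ) : ℤ) • x = (n : ℤ) • ((m : ℤ) • x) := by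
        rw [smul_smul]; push_cast; ring_nf
      have h2 : ((m * n : ℕ) : ℤ) • y = (m : ℤ) • ((n : ℤ) • y) := by
        rw [smul_smul]; push_cast; ring_nf
      rw [smul_add, h1, h2]
      exact add_mem (Submodule.smul_mem _ _ hmx) (Submodule.smul_mem _ _ hny)
  | smul q x hx ih =>
      obtain ⟨n, hn, hnx⟩ := ih
      refine ⟨n * q.den, Nat.mul_pos hn q.pos, ?_⟩
      have hcalc : ((n * q.den : ℕ) : ℤ) • (q • x) = q.num • ((n : ℤ) • x) := by
        rw [← Int.cast_smul_eq_zsmul ℚ ((n * q.den : ℕ) : ℤ) (q • x), smul_smul]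
        have h1 : ((((n * q.den : ℕ) : ℤ) : ℚ)) * q = (((n : ℤ) * q.num : ℤ) : ℚ) := by
          push_cast
          rw [mul_assoc, Rat.den_mul_eq_num]
        rw [h1, Int.cast_smul_eq_zsmul, mul_comm, mul_smul]
      rw [hcalc]
      exact Submodule.smul_mem _ _ hnx

/-- The grid `𝔾_h = {h(λ₁+⋯+λ_n) : λᵢ ∈ Λ, n ≥ 1}` generated by a stencil `Λ`. -/
def gridSet {d : ℕ} (Λ : Finset (EuclideanSpace ℝ (Fin d))) (h : ℝ) :
    Set (EuclideanSpace ℝ (Fin d)) :=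
  {x | ∃ l : List (EuclideanSpace ℝ (Fin d)),
    l ≠ [] ∧ (∀ y ∈ l, y ∈ Λ) ∧ x = h • l.sum}

/-- If every linearly dependent subset of the finite stencil `Λ ⊂ ℝ^d` is already
linearly dependent over the rationals, then the grid `𝔾_h` generated by `Λ` meets every
bounded set in a finite set. -/
theorem gridSet_locally_finite {d : ℕ} (Λ : Finset (EuclideanSpace ℝ (Fin d)))
    (hΛ : ∀ Λ' : Finset (EuclideanSpace ℝ (Fin d)), Λ' ⊆ Λ →
      ¬ LinearIndependent ℝ (Subtype.val : {x // x ∈ Λ'} → EuclideanSpace ℝ (Fin d)) →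
      ¬ LinearIndependent ℚ (Subtype.val : {x // x ∈ Λ'} → EuclideanSpace ℝ (Fin d)))
    (h : ℝ) (hh : 0 < h) :
    ∀ B : Set (EuclideanSpace ℝ (Fin d)), Bornology.IsBounded B →
      (gridSet Λ h ∩ B).Finite := by
  classical
  intro B hB
  -- a maximal ℚ-linearly independent subset
  obtain ⟨s, hsΛ, hspan, hsli⟩ := exists_linearIndependent ℚ ((Λ : Set (EuclideanSpace ℝ (Fin d))))
  have hsfin : s.Finite := Λ.finite_toSet.subset hsΛ
  have hcoe : (hsfin.toFinset : Set (EuclideanSpace ℝ (Fin d))) = s := hsfin.coe_toFinset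
  have hsub : hsfin.toFinset ⊆ Λ := by
    intro x hx
    rw [Set.Finite.mem_toFinset] at hx
    exact_mod_cast hsΛ hx
  -- it is ℝ-linearly independent by the hypothesis
  have hQ : LinearIndependent ℚ (Subtype.val : {x // x ∈ hsfin.toFinset} → EuclideanSpace ℝ (Fin d)) := by
    rw [← hcoe] at hsli; exact hsli
  have hR' : LinearIndependent ℝ (Subtype.val : {x // x ∈ hsfin.toFinset} → EuclideanSpace ℝ (Fin d)) := by
    by_contra hc
    exact hΛ _ hsub hc hQ
  have hRs : LinearIndependent ℝ ((↑) : s → EuclideanSpace ℝ (Fin d)) := by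
    rw [← hcoe]; exact hR'
  -- common denominator
  have key : ∀ x ∈ Λ, ∃ n : ℕ, 0 < n ∧ (n : ℤ) • x ∈ span ℤ s := by
    intro x hx
    refine aux_denom s ?_
    rw [hspan]
    exact subset_span (by exact_mod_cast hx)
  set f : EuclideanSpace ℝ (Fin d) → ℕ := fun x => if hx : x ∈ Λ then (key x hx).choose else 1 with hf
  set N : ℕ := ∏ x ∈ Λ, f x with hN
  have hfpos : ∀ x ∈ Λ, 0 < f x := by
    intro x hx
    simp only [hf, dif_pos hx]
    exact (key x hx).choose_spec.1
  have hNpos : 0 < N := Finset.prod_pos hfpos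
  have hNmem : ∀ x ∈ Λ, (N : ℤ) • x ∈ span ℤ s := by
    intro x hx
    obtain ⟨k, hk⟩ := Finset.dvd_prod_of_mem f hx
    have hcast : (N : ℤ) = (k : ℤ) * (f x : ℤ) := by
      rw [hN, hk]; push_cast; ring
    have hkey : (N : ℤ) • x = (k : ℤ) • ((f x : ℤ) • x) := by
      rw [hcast, mul_smul]
    rw [hkey]
    refine Submodule.smul_mem _ _ ?_
    have := (key x hx).choose_spec.2
    simpa only [hf, dif_pos hx] using this
  -- grid sums
  have hsum : ∀ l : List (EuclideanSpace ℝ (Fin d)), (∀ y ∈ l, y ∈ Λ) → (N : ℤ) • l.sum ∈ span ℤ s := by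
    intro l hl
    induction l with
    | nil => simp
    | cons a t ih =>
        rw [List.sum_cons, smul_add]
        exact add_mem (hNmem a (hl a List.mem_cons_self))
          (ih fun y hy => hl y (List.mem_cons_of_mem _ hy))
  -- extend to a basis and get the lattice
  have hRs0 : LinearIndepOn ℝ id s := hRs
  have b := Module.Basis.extend hRs0
  haveI := FiniteDimensional.fintypeBasisIndex (Module.Basis.extend hRs0)
  set L : Submodule ℤ (EuclideanSpace ℝ (Fin d)) := span ℤ (LinearIndepOn.extend hRs0 (Set.subset_univ s)) with hL
  have hdisc : DiscreteTopology (span ℤ (Set.range (Module.Basis.extend hRs0)) : Submodule ℤ (EuclideanSpace ℝ (Fin d))) :=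
    inferInstance
  rw [Module.Basis.range_extend] at hdisc
  haveI hdisc' : DiscreteTopology ((L : Set (EuclideanSpace ℝ (Fin d))) : Type _) := hdisc
  have hclosed : IsClosed (L : Set (EuclideanSpace ℝ (Fin d))) := by
    haveI : DiscreteTopology L.toAddSubgroup := hdisc
    exact AddSubgroup.isClosed_of_discrete (H := L.toAddSubgroup)
  have hle : span ℤ s ≤ L := span_mono (LinearIndepOn.subset_extend hRs0 _)
  -- the rescaling map
  set c : ℝ := (N : ℝ) / h with hc
  have hc0 : c ≠ 0 := div_ne_zero (by exact_mod_cast hNpos.ne') hh.ne'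
  have himg : (fun x : EuclideanSpace ℝ (Fin d) => c • x) '' (gridSet Λ h ∩ B) ⊆ (c • B) ∩ (L : Set (EuclideanSpace ℝ (Fin d))) := by
    rintro - ⟨x, ⟨⟨l, -, hlΛ, rfl⟩, hxB⟩, rfl⟩
    constructor
    · exact Set.smul_mem_smul_set hxB
    · show c • (h • l.sum) ∈ (L : Set (EuclideanSpace ℝ (Fin d)))
      have : c • (h • l.sum) = (N : ℝ) • l.sum := by
        rw [smul_smul, hc, div_mul_cancel₀ _ hh.ne']
      rw [this]
      have : ((N : ℝ)) • l.sum = ((N : ℤ) : ℝ) • l.sum := by norm_cast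
      rw [this, Int.cast_smul_eq_zsmul]
      exact hle (hsum l hlΛ)
  have hfin : ((c • B) ∩ (L : Set (EuclideanSpace ℝ (Fin d)))).Finite :=
    Metric.finite_isBounded_inter_isClosed DiscreteTopology.isDiscrete (hB.smul₀ c) hclosed
  refine Set.Finite.of_finite_image (hfin.subset himg) ?_
  exact (smul_right_injective (EuclideanSpace ℝ (Fin d)) hc0).injOn
end

section
/- Let s̄ > 0 and ρ(x) = (1 + |εx|²)^{−s̄/2} on ℝ^d with ε > 0. Then for every δ > 0 there exists ε > 0 such that for all x ∈ ℝ^d, λ ∈ ℝ^d with |λ| ≤ L, and 0 < |h| < 1, the relative difference quotient satisfies |δ_{h,λ}ρ(x)/ρ(x)| ≤ δ. -/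
open Real

set_option maxHeartbeats 1000000

/-- On `[1/2, ∞)`, the function `u ↦ u^(-p)` is Lipschitz with constant `p * 2^(p+1)`. -/
lemma rpow_neg_sub_one_le (p : ℝ) (hp : 0 < p) {u : ℝ} (hu : 1/2 ≤ u) :
    |u ^ (-p) - 1| ≤ (p * 2 ^ (p + 1)) * |u - 1| := by
  have hs : Convex ℝ (Set.Ici (1/2 : ℝ)) := convex_Ici _
  have hderiv : ∀ v ∈ Set.Ici (1/2 : ℝ),
      HasDerivWithinAt (fun t : ℝ => t ^ (-p)) ((-p) * v ^ (-p - 1)) (Set.Ici (1/2)) v := by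
    intro v hv
    have hv0 : v ≠ 0 := by
      have : (1/2 : ℝ) ≤ v := hv
      positivity
    exact (Real.hasDerivAt_rpow_const (Or.inl hv0)).hasDerivWithinAt
  have hbound : ∀ v ∈ Set.Ici (1/2 : ℝ), ‖(-p) * v ^ (-p - 1)‖ ≤ p * 2 ^ (p + 1) := by
    intro v hv
    have hv' : (1/2 : ℝ) ≤ v := hv
    have hv0 : (0 : ℝ) < 1/2 := by norm_num
    have h1 : v ^ (-p - 1) ≤ (1/2 : ℝ) ^ (-p - 1) :=
      Real.rpow_le_rpow_of_nonpos hv0 hv' (by linarith)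
    have h2 : ((1/2 : ℝ)) ^ (-p - 1) = 2 ^ (p + 1) := by
      rw [show (1/2 : ℝ) = 2⁻¹ by norm_num, ← Real.rpow_neg_one 2,
        ← Real.rpow_mul (by norm_num : (0:ℝ) ≤ 2)]
      congr 1; ring
    have hv0' : (0 : ℝ) ≤ v := by linarith
    have h3 : (0:ℝ) ≤ v ^ (-p - 1) := Real.rpow_nonneg hv0' _
    rw [norm_mul, norm_neg, Real.norm_eq_abs, Real.norm_eq_abs, abs_of_pos hp,
      abs_of_nonneg h3]
    calc p * v ^ (-p - 1) ≤ p * (1/2 : ℝ) ^ (-p - 1) := by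
          exact mul_le_mul_of_nonneg_left h1 hp.le
      _ = p * 2 ^ (p + 1) := by rw [h2]
  have h1mem : (1 : ℝ) ∈ Set.Ici (1/2 : ℝ) := by norm_num
  have humem : u ∈ Set.Ici (1/2 : ℝ) := hu
  have := hs.norm_image_sub_le_of_norm_hasDerivWithin_le hderiv hbound h1mem humem
  simpa [Real.one_rpow] using this

/-- For the weight `ρ(x) = (1 + |εx|²)^{−s̄/2}` with `s̄ > 0`: for every `δ > 0` there is
`ε > 0` such that for all `x`, all `λ` with `|λ| ≤ L` and all `0 < |h| < 1`,
`|δ_{h,λ}ρ(x)/ρ(x)| ≤ δ`, where `δ_{h,λ}ρ(x) = (1/h)(ρ(x+hλ) − ρ(x))`. -/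
theorem weight_relative_difference_small {d : ℕ} (sbar L : ℝ) (hs : 0 < sbar)
    (hL : 0 ≤ L) :
    ∀ δ : ℝ, 0 < δ → ∃ ε : ℝ, 0 < ε ∧
      ∀ (x lam : EuclideanSpace ℝ (Fin d)) (h : ℝ), ‖lam‖ ≤ L → 0 < |h| → |h| < 1 →
        |(((1 + ‖ε • (x + h • lam)‖ ^ 2) ^ (-(sbar / 2))
            - (1 + ‖ε • x‖ ^ 2) ^ (-(sbar / 2))) / h)
          / ((1 + ‖ε • x‖ ^ 2) ^ (-(sbar / 2)))| ≤ δ := by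
  intro δ hδ
  set p : ℝ := sbar / 2 with hp_def
  have hp : 0 < p := by positivity
  set C : ℝ := p * 2 ^ (p + 1) with hC_def
  have hC : 0 < C := by positivity
  set t : ℝ := min (1/2) (δ / C) with ht_def
  have ht : 0 < t := lt_min (by norm_num) (by positivity)
  have htC : C * t ≤ δ := by
    have : t ≤ δ / C := min_le_right _ _
    calc C * t ≤ C * (δ / C) := by exact mul_le_mul_of_nonneg_left this hC.le
      _ = δ := by field_simp
  have ht2 : t ≤ 1/2 := min_le_left _ _
  refine ⟨min 1 (t / (L ^ 2 + L + 1)), lt_min one_pos (by positivity), ?_⟩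
  set ε : ℝ := min 1 (t / (L ^ 2 + L + 1)) with hε_def
  have hε0 : 0 < ε := lt_min one_pos (by positivity)
  have hε1 : ε ≤ 1 := min_le_left _ _
  have hεt : ε * (L ^ 2 + L + 1) ≤ t := by
    have h1 : ε ≤ t / (L ^ 2 + L + 1) := min_le_right _ _
    have h2 : (0:ℝ) < L ^ 2 + L + 1 := by positivity
    calc ε * (L ^ 2 + L + 1) ≤ (t / (L ^ 2 + L + 1)) * (L ^ 2 + L + 1) :=
          mul_le_mul_of_nonneg_right h1 h2.le
      _ = t := by field_simp
  intro x lam h hlam hh0 hh1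
  set a : ℝ := 1 + ‖ε • x‖ ^ 2 with ha_def
  set b : ℝ := 1 + ‖ε • (x + h • lam)‖ ^ 2 with hb_def
  have ha1 : (1:ℝ) ≤ a := by
    have : (0:ℝ) ≤ ‖ε • x‖ ^ 2 := by positivity
    linarith
  have hb1 : (1:ℝ) ≤ b := by
    have : (0:ℝ) ≤ ‖ε • (x + h • lam)‖ ^ 2 := by positivity
    linarith
  have ha0 : (0:ℝ) < a := by linarith
  have hb0 : (0:ℝ) < b := by linarith
  -- expand norms
  have hxnorm : ‖ε • x‖ ^ 2 = ε ^ 2 * ‖x‖ ^ 2 := by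
    rw [norm_smul, Real.norm_eq_abs, mul_pow, sq_abs]
  have hynorm : ‖ε • (x + h • lam)‖ ^ 2 = ε ^ 2 * ‖x + h • lam‖ ^ 2 := by
    rw [norm_smul, Real.norm_eq_abs, mul_pow, sq_abs]
  have hexp : ‖x + h • lam‖ ^ 2
      = ‖x‖ ^ 2 + 2 * (h * inner ℝ x lam) + h ^ 2 * ‖lam‖ ^ 2 := by
    rw [norm_add_sq_real, real_inner_smul_right, norm_smul, Real.norm_eq_abs, mul_pow, sq_abs]
  have hba : b - a = ε ^ 2 * (2 * (h * inner ℝ x lam) + h ^ 2 * ‖lam‖ ^ 2) := by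
    rw [hb_def, ha_def, hynorm, hxnorm, hexp]; ring
  -- bound |b - a|
  have hinner : |(inner ℝ x lam : ℝ)| ≤ ‖x‖ * L := by
    calc |(inner ℝ x lam : ℝ)| ≤ ‖x‖ * ‖lam‖ := abs_real_inner_le_norm x lam
      _ ≤ ‖x‖ * L := mul_le_mul_of_nonneg_left hlam (norm_nonneg x)
  have hlamL : ‖lam‖ ^ 2 ≤ L ^ 2 := by
    have := norm_nonneg lam
    nlinarith
  have hbabound : |b - a| ≤ |h| * (ε ^ 2 * (2 * ‖x‖ * L + L ^ 2)) := by
    rw [hba]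
    have h2 : h ^ 2 = |h| ^ 2 := (sq_abs h).symm
    have habs : |2 * (h * inner ℝ x lam) + h ^ 2 * ‖lam‖ ^ 2|
        ≤ 2 * |h| * (‖x‖ * L) + h ^ 2 * ‖lam‖ ^ 2 := by
      have h1 : |2 * (h * inner ℝ x lam)| ≤ 2 * |h| * (‖x‖ * L) := by
        rw [abs_mul, abs_mul, abs_two]
        have : |h| * |(inner ℝ x lam : ℝ)| ≤ |h| * (‖x‖ * L) :=
          mul_le_mul_of_nonneg_left hinner (abs_nonneg h)
        nlinarith [abs_nonneg h]
      have h2' : |h ^ 2 * ‖lam‖ ^ 2| = h ^ 2 * ‖lam‖ ^ 2 := abs_of_nonneg (by positivity)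
      calc |2 * (h * inner ℝ x lam) + h ^ 2 * ‖lam‖ ^ 2|
          ≤ |2 * (h * inner ℝ x lam)| + |h ^ 2 * ‖lam‖ ^ 2| := abs_add_le _ _
        _ ≤ 2 * |h| * (‖x‖ * L) + h ^ 2 * ‖lam‖ ^ 2 := by rw [h2']; linarith
    rw [abs_mul, abs_of_nonneg (by positivity : (0:ℝ) ≤ ε ^ 2)]
    have hh2le : h ^ 2 * ‖lam‖ ^ 2 ≤ |h| * L ^ 2 := by
      have : h ^ 2 ≤ |h| := by nlinarith [abs_nonneg h, sq_abs h]
      nlinarith [sq_nonneg ‖lam‖, abs_nonneg h]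
    calc ε ^ 2 * |2 * (h * inner ℝ x lam) + h ^ 2 * ‖lam‖ ^ 2|
        ≤ ε ^ 2 * (2 * |h| * (‖x‖ * L) + |h| * L ^ 2) := by
          apply mul_le_mul_of_nonneg_left _ (by positivity)
          linarith [habs, hh2le]
      _ = |h| * (ε ^ 2 * (2 * ‖x‖ * L + L ^ 2)) := by ring
  -- bound |b/a - 1| ≤ |h| * t
  have hratio : |b / a - 1| ≤ |h| * t := by
    rw [show b / a - 1 = (b - a) / a by field_simp, abs_div, abs_of_pos ha0]
    rw [div_le_iff₀ ha0]
    have key : ε ^ 2 * (2 * ‖x‖ * L + L ^ 2) ≤ t * a := by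
      have hA : a = 1 + ε ^ 2 * ‖x‖ ^ 2 := by rw [ha_def, hxnorm]
      -- 2 ε ‖x‖ ≤ 1 + ε^2 ‖x‖^2, so ε^2 * 2‖x‖L ≤ εL * a; ε^2 L^2 ≤ ε L^2 ≤ ε L^2 * a
      have hamgm : 2 * ε * ‖x‖ ≤ 1 + ε ^ 2 * ‖x‖ ^ 2 := by nlinarith [sq_nonneg (1 - ε * ‖x‖)]
      have hm : ε * (L ^ 2 + L) ≤ t := by
        have hid : ε * (L ^ 2 + L) + ε = ε * (L ^ 2 + L + 1) := by ring
        linarith [hεt, hε0.le, hε0]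
      have P1 : 2 * ε ^ 2 * ‖x‖ * L ≤ ε * L * (1 + ε ^ 2 * ‖x‖ ^ 2) := by
        nlinarith [mul_le_mul_of_nonneg_left hamgm (mul_nonneg hε0.le hL)]
      have P2 : ε ^ 2 * L ^ 2 ≤ ε * L ^ 2 * (1 + ε ^ 2 * ‖x‖ ^ 2) := by
        nlinarith [sq_nonneg L, sq_nonneg (ε * ‖x‖), mul_nonneg hε0.le (sq_nonneg L),
          mul_nonneg (mul_nonneg hε0.le (sq_nonneg L)) (sq_nonneg (ε * ‖x‖)), hε1]
      have P3 : ε * (L ^ 2 + L) * (1 + ε ^ 2 * ‖x‖ ^ 2) ≤ t * (1 + ε ^ 2 * ‖x‖ ^ 2) :=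
        mul_le_mul_of_nonneg_right hm (by positivity)
      have P4 : ε * L * (1 + ε ^ 2 * ‖x‖ ^ 2) + ε * L ^ 2 * (1 + ε ^ 2 * ‖x‖ ^ 2)
          = ε * (L ^ 2 + L) * (1 + ε ^ 2 * ‖x‖ ^ 2) := by ring
      rw [hA]
      linarith [P1, P2, P3, P4]
    calc |b - a| ≤ |h| * (ε ^ 2 * (2 * ‖x‖ * L + L ^ 2)) := hbabound
      _ ≤ |h| * (t * a) := mul_le_mul_of_nonneg_left key (abs_nonneg h)
      _ = |h| * t * a := by ring
  have hba_half : (1:ℝ)/2 ≤ b / a := by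
    have h1 : |b / a - 1| ≤ 1/2 := by
      calc |b / a - 1| ≤ |h| * t := hratio
        _ ≤ 1 * t := mul_le_mul_of_nonneg_right hh1.le ht.le
        _ ≤ 1/2 := by linarith
    have := abs_le.mp h1
    linarith [this.1]
  -- apply the Lipschitz bound
  have hkey : |(b / a) ^ (-p) - 1| ≤ |h| * δ := by
    calc |(b / a) ^ (-p) - 1| ≤ C * |b / a - 1| := rpow_neg_sub_one_le p hp hba_half
      _ ≤ C * (|h| * t) := mul_le_mul_of_nonneg_left hratio hC.le
      _ = |h| * (C * t) := by ring
      _ ≤ |h| * δ := mul_le_mul_of_nonneg_left htC (abs_nonneg h)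
  -- rewrite the original expression
  have hdiv : (b / a) ^ (-p) = b ^ (-p) / a ^ (-p) := Real.div_rpow hb0.le ha0.le (-p)
  have ha_pos : (0:ℝ) < a ^ (-p) := Real.rpow_pos_of_pos ha0 _
  have hrw : ((b ^ (-(sbar/2)) - a ^ (-(sbar/2))) / h) / a ^ (-(sbar/2))
      = ((b / a) ^ (-p) - 1) / h := by
    rw [hdiv]
    field_simp
    rw [show (-(sbar / 2) : ℝ) = -p by rw [hp_def]]
    ring
  rw [hrw, abs_div]
  rw [div_le_iff₀ hh0]
  calc |(b / a) ^ (-p) - 1| ≤ |h| * δ := hkey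
    _ = δ * |h| := by ring
end
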